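/- Let k be an algebraically closed field with char k ∉ {2,3}, and let c ∈ k satisfy c ≠ 0 and (3c)³ ≠ (2+c³)³. Then in the Sklyanin algebra S(1,1,c) there exist elements r and s of the k-linear span of the images of the generators x, y, z such that r and s are linearly independent and r·s = −(s·r). -/

import Mathlib

noncomputable section

/-- The free algebra on three generators `x, y, z` (indexed by `Fin 3`). -/
abbrev F3 (k : Type) [Field k] : Type := FreeAlgebra k (Fin 3)

noncomputable def X (k : Type) [Field k] : F3 k := FreeAlgebra.ι k 0
noncomputable def Y (k : Type) [Field k] : F3 k := FreeAlgebra.ι k 1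
noncomputable def Z (k : Type) [Field k] : F3 k := FreeAlgebra.ι k 2

/-- The quotient of the free algebra on `x, y, z` by the two-sided ideal
generated by the set `rels`. -/
abbrev quotAlg (k : Type) [Field k] (rels : Set (F3 k)) : Type :=
  RingQuot (fun a b : F3 k => a ∈ rels ∧ b = 0)

/-- The image of the `i`-th generator in the quotient algebra. -/
noncomputable def gen (k : Type) [Field k] (rels : Set (F3 k)) (i : Fin 3) :
    quotAlg k rels :=
  RingQuot.mkAlgHom k (fun a b : F3 k => a ∈ rels ∧ b = 0) (FreeAlgebra.ι k i)

/-- The `k`-linear span of the images of the generators in the quotient. -/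
noncomputable def genSpan (k : Type) [Field k] (rels : Set (F3 k)) :
    Submodule k (quotAlg k rels) :=
  Submodule.span k (Set.range (gen k rels))

/-- There is a graded isomorphism between the two quotient algebras:
a `k`-algebra isomorphism carrying the span of the generators onto the
span of the generators. -/
def GradedIso (k : Type) [Field k] (r1 r2 : Set (F3 k)) : Prop :=
  ∃ φ : quotAlg k r1 ≃ₐ[k] quotAlg k r2,
    Submodule.map φ.toLinearMap (genSpan k r1) = genSpan k r2

/-- Relations of the three-dimensional Sklyanin algebra `S(a,b,c)`:
`⟨a·yz + b·zy + c·x², a·zx + b·xz + c·y², a·xy + b·yx + c·z²⟩`. -/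
noncomputable def Sklrel (k : Type) [Field k] (a b c : k) : Set (F3 k) :=
  {a • (Y k * Z k) + b • (Z k * Y k) + c • X k ^ 2,
   a • (Z k * X k) + b • (X k * Z k) + c • Y k ^ 2,
   a • (X k * Y k) + b • (Y k * X k) + c • Z k ^ 2}

theorem stmt15 (k : Type) [Field k] [IsAlgClosed k]
    (hchar2 : ringChar k ≠ 2) (hchar3 : ringChar k ≠ 3)
    (c : k) (hc : c ≠ 0) (hEC : (3 * c) ^ 3 ≠ (2 + c ^ 3) ^ 3) :
    ∃ r s : quotAlg k (Sklrel k 1 1 c),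
      r ∈ genSpan k (Sklrel k 1 1 c) ∧ s ∈ genSpan k (Sklrel k 1 1 c) ∧
      LinearIndependent k ![r, s] ∧ r * s = -(s * r) := by
  set rel : F3 k → F3 k → Prop := fun a b => a ∈ Sklrel k 1 1 c ∧ b = 0 with hrel
  set π : F3 k →ₐ[k] quotAlg k (Sklrel k 1 1 c) := RingQuot.mkAlgHom k rel with hπ
  have h2 : (2 : k) ≠ 0 := Ring.two_ne_zero hchar2
  -- the two elements
  set A : F3 k := X k + Y k - (2/c) • Z k with hA
  set B : F3 k := X k - Y k with hB
  refine ⟨π A, π B, ?_, ?_, ?_, ?_⟩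
  · -- membership of r
    have : π A = gen k (Sklrel k 1 1 c) 0 + gen k (Sklrel k 1 1 c) 1
        - (2/c) • gen k (Sklrel k 1 1 c) 2 := by
      simp [hA, X, Y, Z, gen, map_add, map_sub, map_smul]
      rfl
    rw [this]
    exact Submodule.sub_mem _
      (Submodule.add_mem _ (Submodule.subset_span ⟨0, rfl⟩)
        (Submodule.subset_span ⟨1, rfl⟩))
      (Submodule.smul_mem _ _ (Submodule.subset_span ⟨2, rfl⟩))
  · have : π B = gen k (Sklrel k 1 1 c) 0 - gen k (Sklrel k 1 1 c) 1 := by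
      simp [hB, X, Y, Z, gen, map_sub]
      rfl
    rw [this]
    exact Submodule.sub_mem _ (Submodule.subset_span ⟨0, rfl⟩)
      (Submodule.subset_span ⟨1, rfl⟩)
  · -- linear independence via the exterior algebra
    set E := ExteriorAlgebra k (Fin 2 → k) with hE
    set e1 : Fin 2 → k := ![1, 0] with he1
    set e2 : Fin 2 → k := ![0, 1] with he2
    set ψ0 : F3 k →ₐ[k] E :=
      FreeAlgebra.lift k ![ExteriorAlgebra.ι k e1, ExteriorAlgebra.ι k e2, 0] with hψ0
    have hψ0X : ψ0 (X k) = ExteriorAlgebra.ι k e1 := by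
      simp [hψ0, X, FreeAlgebra.lift_ι_apply]
    have hψ0Y : ψ0 (Y k) = ExteriorAlgebra.ι k e2 := by
      simp [hψ0, Y, FreeAlgebra.lift_ι_apply]
    have hψ0Z : ψ0 (Z k) = 0 := by
      simp [hψ0, Z, FreeAlgebra.lift_ι_apply]
    have hkill : ∀ ⦃a b : F3 k⦄, rel a b → ψ0 a = ψ0 b := by
      rintro a b ⟨ha, rfl⟩
      rw [map_zero]
      rcases ha with h | h | h <;> subst h <;>
        simp only [map_add, map_mul, map_smul, map_pow, hψ0X, hψ0Y, hψ0Z, sq]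
      · rw [ExteriorAlgebra.ι_sq_zero, smul_zero]
        simp
      · rw [ExteriorAlgebra.ι_sq_zero, smul_zero]
        simp
      · rw [one_smul, one_smul, ExteriorAlgebra.ι_add_mul_swap]
        simp
    set ψ : quotAlg k (Sklrel k 1 1 c) →ₐ[k] E :=
      RingQuot.liftAlgHom k ⟨ψ0, hkill⟩ with hψ
    have hψπ : ∀ x : F3 k, ψ (π x) = ψ0 x := fun x =>
      RingQuot.liftAlgHom_mkAlgHom_apply k ψ0 hkill x
    have hψA : ψ (π A) = ExteriorAlgebra.ι k (e1 + e2) := by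
      rw [hψπ]
      simp [hA, map_add, map_sub, map_smul, hψ0X, hψ0Y, hψ0Z]
    have hψB : ψ (π B) = ExteriorAlgebra.ι k (e1 - e2) := by
      rw [hψπ]
      simp [hB, map_sub, hψ0X, hψ0Y]
    -- independence of e1+e2, e1-e2 in k²
    have hvind : LinearIndependent k ![e1 + e2, e1 - e2] := by
      rw [LinearIndependent.pair_iff]
      intro s t hst
      have h0 := congrFun hst 0
      have h1 := congrFun hst 1
      simp [he1, he2] at h0 h1
      constructor
      · have : (2 : k) * s = 0 := by linear_combination h0 + h1
        rcases mul_eq_zero.mp this with h | h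
        · exact absurd h h2
        · exact h
      · have : (2 : k) * t = 0 := by linear_combination h0 - h1
        rcases mul_eq_zero.mp this with h | h
        · exact absurd h h2
        · exact h
    have hιind : LinearIndependent k
        ((ExteriorAlgebra.ι k : (Fin 2 → k) →ₗ[k] E) ∘ ![e1 + e2, e1 - e2]) := by
      apply hvind.map'
      rw [LinearMap.ker_eq_bot']
      intro m hm
      exact (ExteriorAlgebra.ι_eq_zero_iff m).mp hm
    apply LinearIndependent.of_comp ψ.toLinearMap
    have : (ψ.toLinearMap ∘ ![π A, π B]) =
        ((ExteriorAlgebra.ι k : (Fin 2 → k) →ₗ[k] E) ∘ ![e1 + e2, e1 - e2]) := by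
      funext i
      fin_cases i <;> simp [hψA, hψB]
    rw [this]
    exact hιind
  · -- r * s = -(s * r)
    have hR1 : π ((1:k) • (Y k * Z k) + (1:k) • (Z k * Y k) + c • X k ^ 2) = 0 := by
      have := RingQuot.mkAlgHom_rel k (s := rel)
        (x := (1:k) • (Y k * Z k) + (1:k) • (Z k * Y k) + c • X k ^ 2) (y := 0)
        ⟨Or.inl rfl, rfl⟩
      simpa [hπ] using this
    have hR2 : π ((1:k) • (Z k * X k) + (1:k) • (X k * Z k) + c • Y k ^ 2) = 0 := by
      have := RingQuot.mkAlgHom_rel k (s := rel)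
        (x := (1:k) • (Z k * X k) + (1:k) • (X k * Z k) + c • Y k ^ 2) (y := 0)
        ⟨Or.inr (Or.inl rfl), rfl⟩
      simpa [hπ] using this
    have hkey : A * B + B * A
        = (2/c) • ((1:k) • (Y k * Z k) + (1:k) • (Z k * Y k) + c • X k ^ 2)
          - (2/c) • ((1:k) • (Z k * X k) + (1:k) • (X k * Z k) + c • Y k ^ 2) := by
      have h2c : (2/c) * c = 2 := by field_simp
      simp only [hA, hB, smul_add, smul_smul, h2c, one_smul, sq]
      noncomm_ring
      module
    have : π A * π B + π B * π A = 0 := by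
      rw [← map_mul, ← map_mul, ← map_add, hkey, map_sub, map_smul, map_smul, hR1, hR2]
      simp
    exact eq_neg_of_add_eq_zero_left this
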